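/- Let d ≥ 5 and let 𝐯 be a sequence over an alphabet of d letters with critical exponent E(𝐯) < (d−1)/(d−2). Then 𝐯 is a Pansiot sequence, i.e.: (i) in each factor of 𝐯 of length d−1 all letters are pairwise distinct, and (ii) whenever i < j are consecutive occurrences of the same letter in 𝐯, the letters v_{i+1} and v_{j+1} are distinct. -/

import Mathlib

open Filter
open scoped ENNReal

namespace BalancedCE

variable {α : Type*} {β : Type*}

/-- The factor of `v` of length `n` starting at position `i`. -/
def factorAt (v : ℕ → α) (i n : ℕ) : List α := (List.range n).map fun k => v (i + k)

/-- `u` is a factor of the sequence `v`. -/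
def IsFactor (v : ℕ → α) (u : List α) : Prop := ∃ i, factorAt v i u.length = u

/-- The word `w` occurs in the sequence `v` at position `i`. -/
def OccursAt (v : ℕ → α) (w : List α) (i : ℕ) : Prop := factorAt v i w.length = w

/-- A sequence is balanced if counts of each letter in equal-length factors differ by at most 1. -/
def Balanced [DecidableEq α] (v : ℕ → α) : Prop :=
  ∀ (a : α) (u w : List α), IsFactor v u → IsFactor v w → u.length = w.length →
    |(u.count a : ℤ) - (w.count a : ℤ)| ≤ 1

def EventuallyPeriodic (v : ℕ → α) : Prop :=
  ∃ p, 0 < p ∧ ∃ N, ∀ n, N ≤ n → v (n + p) = v n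

def Recurrent (v : ℕ → α) : Prop :=
  ∀ u : List α, IsFactor v u → ∀ N : ℕ, ∃ i, N ≤ i ∧ OccursAt v u i

/-- `i < j` are consecutive occurrences of the letter `a` in `v`. -/
def ConsecOcc (v : ℕ → α) (a : α) (i j : ℕ) : Prop :=
  i < j ∧ v i = a ∧ v j = a ∧ ∀ k, i < k → k < j → v k ≠ a

/-- `p` is a period of the finite word `z` (i.e. `z` is a prefix of `u^ω` with `|u| = p`). -/
def IsPeriod (z : List α) (p : ℕ) : Prop :=
  0 < p ∧ ∀ i, i + p < z.length → z[i]? = z[i + p]?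

/-- The minimal period of a finite word. -/
noncomputable def minPeriod (z : List α) : ℕ := sInf {p | IsPeriod z p}

/-- The exponent of a finite word: its length divided by its minimal period. -/
noncomputable def expE (z : List α) : ℝ≥0∞ := (z.length : ℝ≥0∞) / (minPeriod z : ℝ≥0∞)

/-- The critical exponent of a sequence: the supremum of exponents of nonempty factors. -/
noncomputable def criticalExponent (v : ℕ → α) : ℝ≥0∞ :=
  ⨆ (z : List α) (_ : IsFactor v z ∧ z ≠ []), expE z

/-- A Pansiot sequence over a `d`-letter alphabet. -/
def Pansiot (d : ℕ) (v : ℕ → α) : Prop :=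
  (∀ i : ℕ, (factorAt v i (d - 1)).Nodup) ∧
  ∀ (a : α) (i j : ℕ), ConsecOcc v a i j → v (i + 1) ≠ v (j + 1)

/-- The letter `a` has frequency `ρ` in the sequence `v`. -/
def HasFreq [DecidableEq α] (v : ℕ → α) (a : α) (ρ : ℝ) : Prop :=
  Tendsto (fun n => ((factorAt v 0 n).count a : ℝ) / n) atTop (nhds ρ)

/-- Factor complexity of a sequence. -/
noncomputable def complexity (v : ℕ → α) (n : ℕ) : ℕ :=
  Set.ncard {u : List α | IsFactor v u ∧ u.length = n}

/-- Sturmian sequences: aperiodic binary sequences of factor complexity `n + 1`.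
Convention: the letter `a` is `false`, the letter `b` is `true`. -/
def Sturmian (u : ℕ → Bool) : Prop :=
  ¬ EventuallyPeriodic u ∧ ∀ n, complexity u n = n + 1

/-- Prepending a letter to a sequence. -/
def consSeq (c : α) (v : ℕ → α) : ℕ → α := fun n =>
  match n with
  | 0 => c
  | Nat.succ m => v m

/-- A standard sequence: a Sturmian sequence `u` such that `a·u` and `b·u` are Sturmian. -/
def IsStandard (u : ℕ → Bool) : Prop :=
  Sturmian u ∧ Sturmian (consSeq false u) ∧ Sturmian (consSeq true u)

/-- The slope of a binary sequence, with the convention `ρ_b > ρ_a` (`a = false`, `b = true`). -/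
def HasSlope (u : ℕ → Bool) (θ : ℝ) : Prop :=
  ∃ ρa ρb : ℝ, HasFreq u false ρa ∧ HasFreq u true ρb ∧ ρa < ρb ∧ θ = ρa / ρb

/-- `θ` has the (infinite) continued fraction expansion `[0; a 1, a 2, a 3, …]`:
there are complete quotients' fractional parts `t n ∈ (0,1)` with `t 0 = θ` and
`1 / t n = a (n+1) + t (n+1)` for all `n`. (The value `a 0` is irrelevant.) -/
def HasCF (θ : ℝ) (a : ℕ → ℕ) : Prop :=
  ∃ t : ℕ → ℝ, t 0 = θ ∧ ∀ n, 0 < t n ∧ t n < 1 ∧ 1 / t n = (a (n + 1) : ℝ) + t (n + 1)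

/-- Number of positions `< n` where `u` takes the value `c`. -/
def countBefore (u : ℕ → Bool) (c : Bool) (n : ℕ) : ℕ :=
  ((List.range n).filter fun i => u i = c).length

/-- The colouring of a binary sequence `u` by `y` (on the `a = false` positions)
and `y'` (on the `b = true` positions). -/
def colour (u : ℕ → Bool) (y : ℕ → α) (y' : ℕ → β) : ℕ → α ⊕ β := fun n =>
  if u n = false then Sum.inl (y (countBefore u false n))
  else Sum.inr (y' (countBefore u true n))

/-- A constant gap sequence: periodic, and consecutive occurrences of each occurring
letter are at a constant distance. -/
def ConstantGap (y : ℕ → α) : Prop :=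
  (∃ p, 0 < p ∧ ∀ n, y (n + p) = y n) ∧
  ∀ c : α, (∃ i, y i = c) → ∃ g, 0 < g ∧ ∀ i j, ConsecOcc y c i j → j - i = g

/-- The discolouration (projection) map: letters of the first alphabet go to `a = false`,
letters of the second alphabet go to `b = true`. -/
def proj : α ⊕ β → Bool := Sum.elim (fun _ => false) (fun _ => true)

/-- `v` is a return word to `w` in the sequence `z`. -/
def IsReturnWord (z : ℕ → α) (w v : List α) : Prop :=
  ∃ i j : ℕ, i < j ∧ OccursAt z w i ∧ OccursAt z w j ∧
    (∀ k, i < k → k < j → ¬ OccursAt z w k) ∧ v = factorAt z i (j - i)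

def RightSpecial (z : ℕ → α) (w : List α) : Prop :=
  ∃ a b : α, a ≠ b ∧ IsFactor z (w ++ [a]) ∧ IsFactor z (w ++ [b])

def LeftSpecial (z : ℕ → α) (w : List α) : Prop :=
  ∃ a b : α, a ≠ b ∧ IsFactor z (a :: w) ∧ IsFactor z (b :: w)

def Bispecial (z : ℕ → α) (w : List α) : Prop := LeftSpecial z w ∧ RightSpecial z w

/-- `o` enumerates, in increasing order, all occurrences of `w` in `z`. -/
def IsOccEnum (z : ℕ → α) (w : List α) (o : ℕ → ℕ) : Prop :=
  StrictMono o ∧ (∀ n, OccursAt z w (o n)) ∧ ∀ i, OccursAt z w i → ∃ n, o n = i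

/-- The derived sequence of `z` with respect to the occurrence enumeration `o` of a factor:
its `n`-th letter is the return word between the `n`-th and `(n+1)`-st occurrences. -/
def derivedSeq (z : ℕ → α) (o : ℕ → ℕ) : ℕ → List α :=
  fun n => factorAt z (o n) (o (n + 1) - o n)

/-- The slope of a sequence over a two-letter alphabet:
the ratio of the smaller letter frequency to the larger one. -/
def HasSlope2 {γ : Type*} [DecidableEq γ] (z : ℕ → γ) (θ : ℝ) : Prop :=
  ∃ (c c' : γ) (ρ ρ' : ℝ), c ≠ c' ∧ (∀ n, z n = c ∨ z n = c') ∧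
    HasFreq z c ρ ∧ HasFreq z c' ρ' ∧ ρ < ρ' ∧ θ = ρ / ρ'

/-- The purely cyclic constant gap sequence `(0 1 ⋯ (δ-1))^ω` over `ZMod δ`. -/
def cyc (δ : ℕ) : ℕ → ZMod δ := fun n => (n : ZMod δ)

/-- The colouring `colour(u, (1 2 ⋯ δ)^ω, (1' 2' ⋯ δ')^ω)` over `2δ` letters. -/
def colourCyc (δ : ℕ) (u : ℕ → Bool) : ℕ → ZMod δ ⊕ ZMod δ := colour u (cyc δ) (cyc δ)


lemma factorAt_length (v : ℕ → α) (i n : ℕ) : (factorAt v i n).length = n := by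
  simp [factorAt]

lemma factorAt_getElem? (v : ℕ → α) (i : ℕ) {n k : ℕ} (h : k < n) :
    (factorAt v i n)[k]? = some (v (i + k)) := by
  simp [factorAt, h]

lemma key {d : ℕ} (hd : 5 ≤ d) {v : ℕ → α}
    (hE : criticalExponent v < ((d - 1 : ℕ) : ℝ≥0∞) / ((d - 2 : ℕ) : ℝ≥0∞))
    {z : List α} {q : ℕ} (hf : IsFactor v z) (hne : z ≠ []) (hp : IsPeriod z q) :
    z.length * (d - 2) < q * (d - 1) := by
  by_contra h
  push_neg at h
  have hle : expE z ≤ criticalExponent v :=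
    le_iSup₂ (f := fun z (_ : IsFactor v z ∧ z ≠ []) => expE z) z ⟨hf, hne⟩
  have hmin : minPeriod z ≤ q := Nat.sInf_le hp
  have hq0 : (q : ℝ≥0∞) ≠ 0 := by exact_mod_cast hp.1.ne'
  have hqt : (q : ℝ≥0∞) ≠ ∞ := ENNReal.natCast_ne_top q
  have hB0 : ((d - 2 : ℕ) : ℝ≥0∞) ≠ 0 := by
    have : (0:ℕ) < d - 2 := by omega
    exact_mod_cast this.ne'
  have hBt : ((d - 2 : ℕ) : ℝ≥0∞) ≠ ∞ := ENNReal.natCast_ne_top _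
  have h1 : ((z.length : ℝ≥0∞)) / q ≤ expE z := by
    exact ENNReal.div_le_div_left (by exact_mod_cast hmin) _
  have h2 : ((d - 1 : ℕ) : ℝ≥0∞) / ((d - 2 : ℕ) : ℝ≥0∞) ≤ (z.length : ℝ≥0∞) / q := by
    rw [ENNReal.le_div_iff_mul_le (Or.inl hq0) (Or.inl hqt), div_eq_mul_inv,
      mul_right_comm, ← div_eq_mul_inv, ENNReal.div_le_iff hB0 hBt]
    rw [mul_comm]; exact_mod_cast h
  exact absurd (h2.trans (h1.trans hle)) (not_le.mpr hE)

lemma inj {d : ℕ} (hd : 5 ≤ d) {v : ℕ → α}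
    (hE : criticalExponent v < ((d - 1 : ℕ) : ℝ≥0∞) / ((d - 2 : ℕ) : ℝ≥0∞)) :
    ∀ k m : ℕ, k < m → m - k ≤ d - 2 → v k ≠ v m := by
  intro k m hkm hle heq
  set p := m - k with hpdef
  have hp0 : 0 < p := by omega
  have hkp : k + p = m := by omega
  have hfper : IsPeriod (factorAt v k (p + 1)) p := by
    refine ⟨hp0, fun t ht => ?_⟩
    rw [factorAt_length] at ht
    have ht0 : t = 0 := by omega
    subst ht0
    rw [factorAt_getElem? v k (by omega), factorAt_getElem? v k (by omega)]
    simp [hkp, heq]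
  have hne : factorAt v k (p + 1) ≠ [] := by
    intro h
    have := factorAt_length v k (p + 1)
    rw [h] at this; simp at this
  have := key hd hE ⟨k, by rw [factorAt_length]⟩ hne hfper
  rw [factorAt_length] at this
  have hb : d - 1 = (d - 2) + 1 := by omega
  rw [hb, Nat.mul_add, Nat.mul_one, Nat.add_mul, Nat.one_mul] at this
  omega

theorem statement1 {α : Type*} [Fintype α] (d : ℕ) (hd : 5 ≤ d)
    (hcard : Fintype.card α = d) (v : ℕ → α)
    (hE : criticalExponent v < ((d - 1 : ℕ) : ℝ≥0∞) / ((d - 2 : ℕ) : ℝ≥0∞)) :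
    Pansiot d v := by
  classical
  have hinj := inj hd hE
  have hnd : ∀ i : ℕ, (factorAt v i (d - 1)).Nodup := by
    intro i
    refine List.Nodup.map_on ?_ List.nodup_range
    intro x hx y hy hxy
    rw [List.mem_range] at hx hy
    rcases lt_trichotomy x y with h | h | h
    · exact absurd hxy (hinj (i + x) (i + y) (by omega) (by omega))
    · exact h
    · exact absurd hxy.symm (hinj (i + y) (i + x) (by omega) (by omega))
  refine ⟨hnd, ?_⟩
  intro a i j hc heq
  obtain ⟨hij, hvi, hvj, hbet⟩ := hc
  set p := j - i with hpdef
  have hp0 : 0 < p := by omega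
  have hcards : Fintype.card {x : α // x ≠ a} = d - 1 := by
    rw [Fintype.card_subtype_compl, Fintype.card_subtype_eq, hcard]
  have hgap : p ≤ 2 * d - 4 := by
    by_contra hg
    push_neg at hg
    have hper : ∀ k, i + 1 ≤ k → k + d - 1 ≤ j - 1 → v k = v (k + (d - 1)) := by
      intro k hk1 hk2
      have hfa : ∀ t : Fin d, v (k + t) ≠ a := fun t =>
        hbet (k + t) (by omega) (by have := t.isLt; omega)
      obtain ⟨t, t', htne, hfe⟩ := Fintype.exists_ne_map_eq_of_card_lt
        (fun t : Fin d => (⟨v (k + t), hfa t⟩ : {x // x ≠ a}))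
        (by rw [hcards, Fintype.card_fin]; omega)
      rw [Subtype.mk_eq_mk] at hfe
      have key2 : ∀ s s' : Fin d, s < s' → v (k + s) = v (k + s') → v k = v (k + (d - 1)) := by
        intro s s' hss hveq
        have hd1 : (d : ℕ) - 1 ≤ (s' : ℕ) - (s : ℕ) := by
          by_contra hlt
          exact hinj (k + s) (k + s') (by omega) (by omega) hveq
        have hs0 : (s : ℕ) = 0 ∧ (s' : ℕ) = d - 1 := by
          have := s'.isLt; omega
        rw [show k = k + (s : ℕ) by omega, show k + (s:ℕ) + (d - 1) = k + (s' : ℕ) by omega]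
        exact hveq
      rcases Fin.lt_or_lt_of_ne htne with h | h
      · exact key2 t t' h hfe
      · exact key2 t' t h hfe.symm
    have hzper : IsPeriod (factorAt v (i + 1) (p - 1)) (d - 1) := by
      refine ⟨by omega, fun t ht => ?_⟩
      rw [factorAt_length] at ht
      rw [factorAt_getElem? _ _ (by omega), factorAt_getElem? _ _ ht]
      congr 1
      rw [show i + 1 + (t + (d - 1)) = (i + 1 + t) + (d - 1) by omega]
      exact hper (i + 1 + t) (by omega) (by omega)
    have hne : factorAt v (i + 1) (p - 1) ≠ [] := by
      intro h
      have := factorAt_length v (i + 1) (p - 1)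
      rw [h] at this; simp at this; omega
    have hk := key hd hE ⟨i + 1, by rw [factorAt_length]⟩ hne hzper
    rw [factorAt_length] at hk
    obtain ⟨e, rfl⟩ : ∃ e, d = e + 5 := ⟨d - 5, by omega⟩
    obtain ⟨g, hgp⟩ : ∃ g, p = g + (2 * e + 7) := ⟨p - (2 * e + 7), by omega⟩
    have e1 : p - 1 = g + 2 * e + 6 := by omega
    have e2 : e + 5 - 2 = e + 3 := by omega
    have e3 : e + 5 - 1 = e + 4 := by omega
    rw [e1, e2, e3] at hk
    nlinarith [hk, sq_nonneg e]
  have hz2 : IsPeriod (factorAt v i (p + 2)) p := by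
    refine ⟨hp0, fun t ht => ?_⟩
    rw [factorAt_length] at ht
    rw [factorAt_getElem? _ _ (by omega), factorAt_getElem? _ _ ht]
    congr 1
    rcases (by omega : t = 0 ∨ t = 1) with rfl | rfl
    · rw [show i + 0 = i by omega, show i + (0 + p) = j by omega]
      rw [hvi, hvj]
    · rw [show i + (1 + p) = j + 1 by omega]
      exact heq
  have hne2 : factorAt v i (p + 2) ≠ [] := by
    intro h
    have := factorAt_length v i (p + 2)
    rw [h] at this; simp at this
  have hk2 := key hd hE ⟨i, by rw [factorAt_length]⟩ hne2 hz2
  rw [factorAt_length] at hk2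
  have hb : d - 1 = (d - 2) + 1 := by omega
  rw [hb, Nat.mul_add, Nat.mul_one, Nat.add_mul] at hk2
  omega

end BalancedCE
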